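/- Let X_1, X_2, ... be i.i.d. random matrices taking values in S_d^{[0,1]} with mean M and variance V = E[(X_1 − M)²], and let α ∈ (0,1). For each n ≥ 2 define V̂_n = (1/(n(n−1))) Σ_{1 ≤ i < j ≤ n} (X_i − X_j)² and D_n = sqrt( 2·log(nd/((n−1)α)) / n ) · ( ‖V̂_n‖^{1/2} + min( sqrt( log(2nd/α) / (2n·‖V̂_n‖) ), (2·log(2nd/α)/n)^{1/4} ) ) + log(nd/((n−1)α))/(3n). Then sqrt(n)·D_n converges almost surely to sqrt( 2·log(d/α)·‖V‖ ) as n → ∞. -/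

import Mathlib

open MeasureTheory ProbabilityTheory Filter Matrix Topology

/-- The largest eigenvalue of a real symmetric matrix. -/
noncomputable def lmax {d : ℕ} (A : Matrix (Fin d) (Fin d) ℝ) : ℝ := sSup (spectrum ℝ A)

/-- The smallest eigenvalue of a real symmetric matrix. -/
noncomputable def lmin {d : ℕ} (A : Matrix (Fin d) (Fin d) ℝ) : ℝ := sInf (spectrum ℝ A)

/-- The spectral norm (largest absolute value of eigenvalues) of a real symmetric matrix. -/
noncomputable def specNorm {d : ℕ} (A : Matrix (Fin d) (Fin d) ℝ) : ℝ := max (lmax A) (-(lmin A))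

/-- The Loewner partial order `A ⪯ B`, i.e. `B - A` is positive semidefinite. -/
def LoewnerLE {d : ℕ} (A B : Matrix (Fin d) (Fin d) ℝ) : Prop := (B - A).PosSemidef

/-- `A ∈ S_d^{[0,1]}`: `A` is symmetric with all eigenvalues in `[0,1]`. -/
def memSd01 {d : ℕ} (A : Matrix (Fin d) (Fin d) ℝ) : Prop := A.PosSemidef ∧ (1 - A).PosSemidef

instance matMS {d : ℕ} : MeasurableSpace (Matrix (Fin d) (Fin d) ℝ) := MeasurableSpace.pi

/-- Entrywise expectation of a random matrix. -/
noncomputable def mIntegral {d : ℕ} {Ω : Type*} [MeasurableSpace Ω] (μ : Measure Ω)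
    (X : Ω → Matrix (Fin d) (Fin d) ℝ) : Matrix (Fin d) (Fin d) ℝ :=
  fun i j => ∫ ω, X ω i j ∂μ

/-- Entrywise conditional expectation of a random matrix given a sub-σ-algebra `m`. -/
noncomputable def mCondExp {d : ℕ} {Ω : Type*} {m0 : MeasurableSpace Ω} (m : MeasurableSpace Ω)
    (μ : @Measure Ω m0) (X : Ω → Matrix (Fin d) (Fin d) ℝ) : Ω → Matrix (Fin d) (Fin d) ℝ :=
  fun ω i j => (μ[fun ω' => X ω' i j | m]) ω

/-- Entrywise integrability of a random matrix. -/
def mIntegrable {d : ℕ} {Ω : Type*} [MeasurableSpace Ω] (μ : Measure Ω)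
    (X : Ω → Matrix (Fin d) (Fin d) ℝ) : Prop :=
  ∀ i j, Integrable (fun ω => X ω i j) μ

/-- Entrywise measurability of a random matrix with respect to a σ-algebra `m`. -/
def mMeasurable {d : ℕ} {Ω : Type*} (m : MeasurableSpace Ω)
    (X : Ω → Matrix (Fin d) (Fin d) ℝ) : Prop :=
  ∀ i j, Measurable[m] (fun ω => X ω i j)

/-- The CGF of a centered standard exponential distribution, `ψ_E(γ) = -log(1-γ) - γ`. -/
noncomputable def psiE (g : ℝ) : ℝ := -Real.log (1 - g) - g

/-- The matrix exponential of a real symmetric matrix. -/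
noncomputable def mexp {d : ℕ} (A : Matrix (Fin d) (Fin d) ℝ) : Matrix (Fin d) (Fin d) ℝ :=
  NormedSpace.exp A

section SpecAux


lemma spec_finite (A : Matrix (Fin d) (Fin d) ℝ) : (spectrum ℝ A).Finite :=
  Matrix.finite_real_spectrum (𝕜 := ℝ)

lemma spec_nonempty (hd : 0 < d) {A : Matrix (Fin d) (Fin d) ℝ} (hA : A.IsHermitian) :
    (spectrum ℝ A).Nonempty := by
  rw [hA.spectrum_real_eq_range_eigenvalues]
  have : Nonempty (Fin d) := ⟨⟨0, hd⟩⟩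
  exact Set.range_nonempty _

lemma lmax_mem (hd : 0 < d) {A : Matrix (Fin d) (Fin d) ℝ} (hA : A.IsHermitian) :
    lmax A ∈ spectrum ℝ A :=
  (spec_nonempty hd hA).csSup_mem (spec_finite A)

lemma lmin_mem (hd : 0 < d) {A : Matrix (Fin d) (Fin d) ℝ} (hA : A.IsHermitian) :
    lmin A ∈ spectrum ℝ A :=
  (spec_nonempty hd hA).csInf_mem (spec_finite A)

lemma le_lmax {A : Matrix (Fin d) (Fin d) ℝ} {μ : ℝ} (h : μ ∈ spectrum ℝ A) : μ ≤ lmax A :=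
  le_csSup (spec_finite A).bddAbove h

lemma lmin_le {A : Matrix (Fin d) (Fin d) ℝ} {μ : ℝ} (h : μ ∈ spectrum ℝ A) : lmin A ≤ μ :=
  csInf_le (spec_finite A).bddBelow h

lemma mem_spectrum_sub_iff (A : Matrix (Fin d) (Fin d) ℝ) (c e : ℝ) :
    e ∈ spectrum ℝ (c • (1 : Matrix (Fin d) (Fin d) ℝ) - A) ↔ (c - e) ∈ spectrum ℝ A := by
  rw [spectrum.mem_iff, spectrum.mem_iff, Algebra.algebraMap_eq_smul_one,
    Algebra.algebraMap_eq_smul_one]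
  constructor <;> intro h hu <;> apply h
  · have : e • (1 : Matrix (Fin d) (Fin d) ℝ) - (c • 1 - A) = -((c - e) • 1 - A) := by
      rw [sub_smul]; abel
    rw [this]
    exact hu.neg
  · have : (c - e) • (1 : Matrix (Fin d) (Fin d) ℝ) - A
        = -(e • (1 : Matrix (Fin d) (Fin d) ℝ) - (c • 1 - A)) := by
      rw [sub_smul]; abel
    rw [this]
    exact hu.neg

lemma smul_one_sub_posSemidef (hd : 0 < d) {A : Matrix (Fin d) (Fin d) ℝ} (hA : A.IsHermitian)
    {c : ℝ} (hc : lmax A ≤ c) : (c • (1 : Matrix (Fin d) (Fin d) ℝ) - A).PosSemidef := by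
  have hH : (c • (1 : Matrix (Fin d) (Fin d) ℝ) - A).IsHermitian := by
    refine Matrix.IsHermitian.sub ?_ hA
    refine Matrix.IsHermitian.ext fun i j => ?_
    simp [Matrix.one_apply, eq_comm]
  refine hH.posSemidef_iff_eigenvalues_nonneg.2 fun i => ?_
  have hmem := hH.eigenvalues_mem_spectrum_real i
  rw [mem_spectrum_sub_iff] at hmem
  have := le_lmax hmem
  rw [Pi.zero_apply]
  linarith

lemma quad_le_lmax (hd : 0 < d) {A : Matrix (Fin d) (Fin d) ℝ} (hA : A.IsHermitian)
    (v : Fin d → ℝ) : v ⬝ᵥ (A *ᵥ v) ≤ lmax A * (v ⬝ᵥ v) := by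
  have h := (smul_one_sub_posSemidef hd hA le_rfl).dotProduct_mulVec_nonneg v
  rw [star_trivial, Matrix.sub_mulVec, Matrix.smul_mulVec, Matrix.one_mulVec,
    dotProduct_sub, dotProduct_smul] at h
  have : (lmax A) • (v ⬝ᵥ v) = lmax A * (v ⬝ᵥ v) := rfl
  linarith [h]

lemma exists_unit_eigen (hd : 0 < d) {A : Matrix (Fin d) (Fin d) ℝ} (hA : A.IsHermitian)
    {μ : ℝ} (h : μ ∈ spectrum ℝ A) :
    ∃ v : Fin d → ℝ, v ⬝ᵥ v = 1 ∧ A *ᵥ v = μ • v := by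
  rw [hA.spectrum_real_eq_range_eigenvalues] at h
  obtain ⟨j, rfl⟩ := h
  refine ⟨⇑(hA.eigenvectorBasis j), ?_, hA.mulVec_eigenvectorBasis j⟩
  have hnorm : ‖hA.eigenvectorBasis j‖ = 1 := hA.eigenvectorBasis.orthonormal.1 j
  have := EuclideanSpace.norm_eq (hA.eigenvectorBasis j)
  rw [hnorm] at this
  have h2 : ∑ i, ‖hA.eigenvectorBasis j i‖ ^ 2 = (1 : ℝ) := by
    rw [← Real.sqrt_one] at this
    rw [Real.sqrt_inj (by positivity) (by positivity)] at this
    simpa using this.symm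
  rw [dotProduct, ← h2]
  refine Finset.sum_congr rfl fun i _ => ?_
  rw [Real.norm_eq_abs, sq_abs, sq]

lemma lmax_add_le (hd : 0 < d) {A B : Matrix (Fin d) (Fin d) ℝ}
    (hA : A.IsHermitian) (hB : B.IsHermitian) : lmax (A + B) ≤ lmax A + lmax B := by
  obtain ⟨v, hv1, hv2⟩ := exists_unit_eigen hd (hA.add hB) (lmax_mem hd (hA.add hB))
  have h1 : v ⬝ᵥ ((A + B) *ᵥ v) = lmax (A + B) := by
    rw [hv2, dotProduct_smul, smul_eq_mul, hv1, mul_one]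
  rw [Matrix.add_mulVec, dotProduct_add] at h1
  have h2 := quad_le_lmax hd hA v
  have h3 := quad_le_lmax hd hB v
  rw [hv1, mul_one] at h2 h3
  linarith

lemma abs_le_entrySum_of_mem_spectrum (hd : 0 < d) {A : Matrix (Fin d) (Fin d) ℝ}
    (hA : A.IsHermitian) {μ : ℝ} (h : μ ∈ spectrum ℝ A) :
    |μ| ≤ ∑ i, ∑ j, |A i j| := by
  obtain ⟨v, hv1, hv2⟩ := exists_unit_eigen hd hA h
  obtain ⟨k, -, hk⟩ := Finset.exists_max_image Finset.univ (fun i => |v i|)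
    (Finset.univ_nonempty_iff.2 ⟨⟨0, hd⟩⟩)
  have hvk : 0 < |v k| := by
    rcases lt_or_eq_of_le (abs_nonneg (v k)) with h' | h'
    · exact h'
    · exfalso
      have hz : ∀ i, v i = 0 := fun i =>
        abs_eq_zero.1 (le_antisymm (h'.symm ▸ hk i (Finset.mem_univ i)) (abs_nonneg _))
      rw [dotProduct] at hv1
      simp [hz] at hv1
  have hEq : μ * v k = ∑ j, A k j * v j := by
    have := congrFun hv2 k
    rw [Matrix.mulVec, dotProduct] at this
    rw [Pi.smul_apply, smul_eq_mul] at this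
    exact this.symm
  have hle : |μ| * |v k| ≤ (∑ j, |A k j|) * |v k| := by
    calc |μ| * |v k| = |μ * v k| := (abs_mul _ _).symm
      _ = |∑ j, A k j * v j| := by rw [hEq]
      _ ≤ ∑ j, |A k j * v j| := Finset.abs_sum_le_sum_abs _ _
      _ ≤ ∑ j, |A k j| * |v k| := by
          refine Finset.sum_le_sum fun j _ => ?_
          rw [abs_mul]
          exact mul_le_mul_of_nonneg_left (hk j (Finset.mem_univ j)) (abs_nonneg _)
      _ = (∑ j, |A k j|) * |v k| := by rw [Finset.sum_mul]
  have h1 : |μ| ≤ ∑ j, |A k j| := le_of_mul_le_mul_right hle hvk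
  refine h1.trans ?_
  exact Finset.single_le_sum (f := fun i => ∑ j, |A i j|)
    (fun i _ => Finset.sum_nonneg fun j _ => abs_nonneg _) (Finset.mem_univ k)

lemma lmin_eq_neg_lmax (A : Matrix (Fin d) (Fin d) ℝ) : lmin A = -lmax (-A) := by
  rw [lmin, lmax, ← spectrum.neg_eq, Real.sInf_def]

lemma specNorm_eq_max (A : Matrix (Fin d) (Fin d) ℝ) :
    specNorm A = max (lmax A) (lmax (-A)) := by
  rw [specNorm, lmin_eq_neg_lmax, neg_neg]

lemma specNorm_nonneg (hd : 0 < d) {A : Matrix (Fin d) (Fin d) ℝ} (hA : A.IsHermitian) :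
    0 ≤ specNorm A := by
  have h1 : lmin A ≤ lmax A := csInf_le_csSup (spec_nonempty hd hA) (spec_finite A).bddBelow
    (spec_finite A).bddAbove
  rw [specNorm]
  rcases le_or_gt 0 (lmax A) with h | h
  · exact le_max_of_le_left h
  · refine le_max_of_le_right (by linarith)

lemma specNorm_le_add (hd : 0 < d) {A B : Matrix (Fin d) (Fin d) ℝ}
    (hA : A.IsHermitian) (hB : B.IsHermitian) :
    specNorm A ≤ specNorm B + ∑ i, ∑ j, |(A - B) i j| := by
  have hAB : (A - B).IsHermitian := hA.sub hB
  have h1 : lmax A ≤ lmax B + ∑ i, ∑ j, |(A - B) i j| := by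
    have := lmax_add_le hd hB hAB
    rw [add_sub_cancel] at this
    refine this.trans (add_le_add_right ?_ _)
    exact (le_abs_self _).trans (abs_le_entrySum_of_mem_spectrum hd hAB (lmax_mem hd hAB))
  have h2 : lmax (-A) ≤ lmax (-B) + ∑ i, ∑ j, |(A - B) i j| := by
    have := lmax_add_le hd hB.neg hAB.neg
    have hrw : -B + -(A - B) = -A := by abel
    rw [hrw] at this
    refine this.trans (add_le_add_right ?_ _)
    refine (le_abs_self _).trans ?_
    have h3 := abs_le_entrySum_of_mem_spectrum hd hAB.neg (lmax_mem hd hAB.neg)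
    refine h3.trans (le_of_eq ?_)
    refine Finset.sum_congr rfl fun i _ => Finset.sum_congr rfl fun j _ => ?_
    simp [abs_sub_comm]
  rw [specNorm_eq_max, specNorm_eq_max]
  exact max_le (h1.trans (add_le_add_left (le_max_left _ _) _))
    (h2.trans (add_le_add_left (le_max_right _ _) _))

lemma abs_specNorm_sub_le (hd : 0 < d) {A B : Matrix (Fin d) (Fin d) ℝ}
    (hA : A.IsHermitian) (hB : B.IsHermitian) :
    |specNorm A - specNorm B| ≤ ∑ i, ∑ j, |(A - B) i j| := by
  rw [abs_sub_le_iff]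
  constructor
  · linarith [specNorm_le_add hd hA hB]
  · have := specNorm_le_add hd hB hA
    simp only [Matrix.sub_apply, abs_sub_comm] at this ⊢
    linarith
end SpecAux

section BddAux

lemma psd_quad {A : Matrix (Fin d) (Fin d) ℝ} (hA : A.PosSemidef) (x : Fin d → ℝ) :
    0 ≤ x ⬝ᵥ (A *ᵥ x) := by
  have := hA.dotProduct_mulVec_nonneg x
  rwa [star_trivial] at this

lemma psd_diag_nonneg {A : Matrix (Fin d) (Fin d) ℝ} (hA : A.PosSemidef) (i : Fin d) :
    0 ≤ A i i := by
  have := psd_quad hA (Pi.single i 1)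
  rwa [Matrix.mulVec_single_one, single_dotProduct, one_mul] at this

lemma memSd01_entry_abs_le_one {A : Matrix (Fin d) (Fin d) ℝ}
    (h : A.PosSemidef ∧ (1 - A).PosSemidef) (i j : Fin d) : |A i j| ≤ 1 := by
  have hdiag : ∀ k, 0 ≤ A k k ∧ A k k ≤ 1 := by
    intro k
    refine ⟨psd_diag_nonneg h.1 k, ?_⟩
    have := psd_diag_nonneg h.2 k
    simp only [Matrix.sub_apply, Matrix.one_apply_eq] at this
    linarith
  rcases eq_or_ne i j with rfl | hij
  · rw [abs_le]
    exact ⟨by linarith [(hdiag i).1], (hdiag i).2⟩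
  · have key : ∀ t : ℝ, 0 ≤ A i i + t * (A i j + A j i) + t^2 * A j j := by
      intro t
      have hq := psd_quad h.1 (Pi.single i 1 + Pi.single j t)
      rw [Matrix.mulVec_add, Matrix.mulVec_single, Matrix.mulVec_single,
        dotProduct_add, add_dotProduct, add_dotProduct] at hq
      simp only [single_dotProduct] at hq
      simp only [mul_one, Pi.single_apply, Pi.smul_apply, MulOpposite.smul_eq_mul_unop,
        MulOpposite.unop_op, Matrix.col_apply] at hq
      ring_nf at hq ⊢
      linarith
    have hsym : A j i = A i j := by
      have := h.1.1
      have := congrFun (congrFun this i) j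
      simpa [Matrix.conjTranspose_apply] using this
    rw [hsym] at key
    have h1 := key 1
    have h2 := key (-1)
    have hii := hdiag i
    have hjj := hdiag j
    rw [abs_le]
    constructor <;> nlinarith
end BddAux

section AlgAux
open Finset

lemma sum_Ioo_succ_top {M : Type*} [AddCommMonoid M] (f : ℕ → M) {i n : ℕ} (h : i < n) :
    ∑ j ∈ Ioo i (n+1), f j = (∑ j ∈ Ioo i n, f j) + f n := by
  have h1 : Ioo i (n+1) = insert n (Ioo i n) := by
    ext j; simp [Finset.mem_Ioo, Finset.mem_insert]; omega
  rw [h1, Finset.sum_insert (by simp)]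
  abel

lemma pair_sq_expand {R : Type*} [Ring R] (a b : R) :
    (a - b)^2 = a^2 - a*b - b*a + b^2 := by
  simp only [sq, mul_sub, sub_mul]
  abel

lemma sum_pairs_sq {R : Type*} [Ring R] (a : ℕ → R) (n : ℕ) :
    ∑ i ∈ range n, ∑ j ∈ Ioo i n, (a i - a j)^2
      = n • (∑ i ∈ range n, (a i)^2) - (∑ i ∈ range n, a i)^2 := by
  induction n with
  | zero => simp
  | succ n ih =>
    have hstep : ∑ i ∈ range (n+1), ∑ j ∈ Ioo i (n+1), (a i - a j)^2
        = (∑ i ∈ range n, ∑ j ∈ Ioo i n, (a i - a j)^2) + ∑ i ∈ range n, (a i - a n)^2 := by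
      rw [Finset.sum_range_succ]
      have h0 : ∑ j ∈ Ioo n (n+1), (a n - a j)^2 = 0 := by
        have : Ioo n (n+1) = (∅ : Finset ℕ) := by ext j; simp
        simp [this]
      rw [h0, add_zero]
      rw [← Finset.sum_add_distrib]
      refine Finset.sum_congr rfl fun i hi => ?_
      exact sum_Ioo_succ_top _ (Finset.mem_range.1 hi)
    rw [hstep, ih]
    have hexp : ∑ i ∈ range n, (a i - a n)^2
        = (∑ i ∈ range n, (a i)^2) - (∑ i ∈ range n, a i) * a n
          - a n * (∑ i ∈ range n, a i) + n • (a n)^2 := by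
      rw [Finset.sum_congr rfl (fun i _ => pair_sq_expand (a i) (a n)),
        Finset.sum_add_distrib, Finset.sum_sub_distrib, Finset.sum_sub_distrib,
        ← Finset.sum_mul, ← Finset.mul_sum, Finset.sum_const, Finset.card_range]
    rw [hexp]
    rw [Finset.sum_range_succ (fun i => (a i)^2), Finset.sum_range_succ a]
    have hsq : ((∑ i ∈ range n, a i) + a n)^2
        = (∑ i ∈ range n, a i)^2 + (∑ i ∈ range n, a i) * a n
          + a n * (∑ i ∈ range n, a i) + (a n)^2 := by
      simp only [sq, add_mul, mul_add]
      abel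
    rw [hsq, succ_nsmul, smul_add]
    abel
end AlgAux

section TailAux
open Real

lemma nat_div_pred_tendsto : Tendsto (fun n : ℕ => (n:ℝ)/((n:ℝ)-1)) atTop (𝓝 1) := by
  have h1 : Tendsto (fun n : ℕ => (n:ℝ) - 1) atTop atTop :=
    tendsto_atTop_add_const_right _ (-1) tendsto_natCast_atTop_atTop
  have h2 : Tendsto (fun n : ℕ => ((n:ℝ) - 1)⁻¹) atTop (𝓝 0) := h1.inv_tendsto_atTop
  have h3 : Tendsto (fun n : ℕ => 1 + ((n:ℝ) - 1)⁻¹) atTop (𝓝 1) := by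
    simpa using (tendsto_const_nhds (x := (1:ℝ)) (f := atTop)).add h2
  refine h3.congr' ?_
  filter_upwards [eventually_ge_atTop 2] with n hn
  have hne : (n:ℝ) - 1 ≠ 0 := by
    have : (2:ℝ) ≤ n := by exact_mod_cast hn
    linarith
  field_simp
  ring

lemma log_ratio_tendsto {c : ℝ} (hc : 0 < c) :
    Tendsto (fun n : ℕ => Real.log ((n:ℝ) * c / (((n:ℝ) - 1)))) atTop (𝓝 (Real.log c)) := by
  have harg : Tendsto (fun n : ℕ => (n:ℝ) * c / ((n:ℝ) - 1)) atTop (𝓝 c) := by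
    have := nat_div_pred_tendsto.mul_const c
    rw [one_mul] at this
    refine this.congr' ?_
    filter_upwards [eventually_ge_atTop 2] with n hn
    have hne : (n:ℝ) - 1 ≠ 0 := by
      have : (2:ℝ) ≤ n := by exact_mod_cast hn
      linarith
    field_simp
  exact ((Real.continuousAt_log hc.ne').tendsto).comp harg

lemma log_lin_div_tendsto {c : ℝ} (hc : 0 < c) :
    Tendsto (fun n : ℕ => Real.log ((n:ℝ) * c) / n) atTop (𝓝 0) := by
  have h1 : Tendsto (fun n : ℕ => Real.log (n:ℝ) / (n:ℝ)) atTop (𝓝 0) :=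
    (Real.isLittleO_log_id_atTop.tendsto_div_nhds_zero).comp tendsto_natCast_atTop_atTop
  have h2 : Tendsto (fun n : ℕ => Real.log c * ((n:ℝ))⁻¹) atTop (𝓝 0) := by
    simpa using (tendsto_const_nhds (x := Real.log c) (f := atTop)).mul
      (tendsto_inv_atTop_nhds_zero_nat)
  have h3 := h1.add h2
  rw [add_zero] at h3
  refine h3.congr' ?_
  filter_upwards [eventually_ge_atTop 1] with n hn
  have hn0 : (0:ℝ) < n := by exact_mod_cast hn
  rw [Real.log_mul hn0.ne' hc.ne']
  field_simp

lemma tail_limit {D : ℝ} (hD : 1 ≤ D) {α : ℝ} (hα : α ∈ Set.Ioo (0 : ℝ) 1)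
    (W : ℕ → ℝ) {v : ℝ} (hv : 0 ≤ v) (hW : Tendsto W atTop (𝓝 v)) :
    Tendsto (fun n : ℕ =>
        Real.sqrt n *
          (Real.sqrt (2 * Real.log ((n : ℝ) * D / (((n : ℝ) - 1) * α)) / n)
            * (Real.sqrt (W n)
              + min
                  (Real.sqrt (Real.log (2 * (n : ℝ) * D / α) / (2 * n * W n)))
                  ((2 * Real.log (2 * (n : ℝ) * D / α) / n) ^ ((1 : ℝ) / 4)))
          + Real.log ((n : ℝ) * D / (((n : ℝ) - 1) * α)) / (3 * n)))
      atTop (𝓝 (Real.sqrt (2 * Real.log (D / α) * v))) := by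
  obtain ⟨hα0, hα1⟩ := hα
  have hDα : 0 < D / α := div_pos (by linarith) hα0
  -- the log sequences
  set L : ℕ → ℝ := fun n => Real.log ((n : ℝ) * D / (((n : ℝ) - 1) * α)) with hLdef
  set L' : ℕ → ℝ := fun n => Real.log (2 * (n : ℝ) * D / α) with hL'def
  have hL : Tendsto L atTop (𝓝 (Real.log (D / α))) := by
    have := log_ratio_tendsto (c := D / α) hDα
    refine this.congr' ?_
    filter_upwards [eventually_ge_atTop 2] with n hn
    congr 1
    have hne : (n:ℝ) - 1 ≠ 0 := by
      have : (2:ℝ) ≤ n := by exact_mod_cast hn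
      linarith
    field_simp
  have hL'n : Tendsto (fun n => L' n / n) atTop (𝓝 0) := by
    have := log_lin_div_tendsto (c := 2 * D / α) (by positivity)
    refine this.congr ?_
    intro n
    simp only [hL'def]
    congr 2
    ring
  -- the min term tends to zero
  have hmin : Tendsto (fun n => min
      (Real.sqrt (L' n / (2 * n * W n)))
      ((2 * L' n / n) ^ ((1 : ℝ) / 4))) atTop (𝓝 0) := by
    have hup : Tendsto (fun n => (2 * L' n / n) ^ ((1 : ℝ) / 4)) atTop (𝓝 0) := by
      have h2 : Tendsto (fun n => 2 * (L' n / n)) atTop (𝓝 0) := by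
        simpa using (hL'n.const_mul 2)
      have h3 : Tendsto (fun n => (2 * (L' n / n)) ^ ((1 : ℝ) / 4)) atTop (𝓝 0) := by
        have hcont : ContinuousAt (fun x : ℝ => x ^ ((1 : ℝ) / 4)) 0 :=
          Real.continuousAt_rpow_const 0 _ (Or.inr (by norm_num))
        have := hcont.tendsto.comp h2
        rwa [Real.zero_rpow (by norm_num)] at this
      refine h3.congr fun n => ?_
      congr 1
      ring
    refine tendsto_of_tendsto_of_tendsto_of_le_of_le' tendsto_const_nhds hup ?_ ?_
    · filter_upwards [eventually_ge_atTop 1] with n hn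
      have hn1 : (1:ℝ) ≤ n := by exact_mod_cast hn
      have hL'0 : 0 ≤ L' n := by
        refine Real.log_nonneg ?_
        rw [le_div_iff₀ hα0]
        nlinarith
      have hb : (0:ℝ) ≤ (2 * L' n / n) ^ ((1 : ℝ) / 4) :=
        Real.rpow_nonneg (by positivity) _
      exact le_min (Real.sqrt_nonneg _) hb
    · filter_upwards with n
      exact min_le_right _ _
  -- the main term
  have hsqrtL : Tendsto (fun n => Real.sqrt (2 * L n)) atTop
      (𝓝 (Real.sqrt (2 * Real.log (D / α)))) := (hL.const_mul 2).sqrt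
  have hB : Tendsto (fun n => Real.sqrt (W n) + min
      (Real.sqrt (L' n / (2 * n * W n)))
      ((2 * L' n / n) ^ ((1 : ℝ) / 4))) atTop (𝓝 (Real.sqrt v)) := by
    have := hW.sqrt.add hmin
    rwa [add_zero] at this
  have hthird : Tendsto (fun n => L n * Real.sqrt ((n:ℝ)⁻¹) / 3) atTop (𝓝 0) := by
    have h0 : Tendsto (fun n : ℕ => Real.sqrt ((n:ℝ)⁻¹)) atTop (𝓝 0) := by
      have := (tendsto_inv_atTop_nhds_zero_nat).sqrt
      rwa [Real.sqrt_zero] at this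
    have := (hL.mul h0).div_const 3
    simpa using this
  have hG : Tendsto (fun n => Real.sqrt (2 * L n) * (Real.sqrt (W n) + min
      (Real.sqrt (L' n / (2 * n * W n)))
      ((2 * L' n / n) ^ ((1 : ℝ) / 4))) + L n * Real.sqrt ((n:ℝ)⁻¹) / 3) atTop
      (𝓝 (Real.sqrt (2 * Real.log (D / α)) * Real.sqrt v + 0)) :=
    (hsqrtL.mul hB).add hthird
  have hlogpos : (0:ℝ) ≤ 2 * Real.log (D / α) := by
    refine mul_nonneg (by norm_num) (Real.log_nonneg ?_)
    rw [le_div_iff₀ hα0]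
    nlinarith
  rw [add_zero, ← Real.sqrt_mul hlogpos v] at hG
  refine hG.congr' ?_
  filter_upwards [eventually_ge_atTop 1] with n hn
  have hn0 : (0:ℝ) < n := by exact_mod_cast hn
  have hss : Real.sqrt n * Real.sqrt n = (n:ℝ) := Real.mul_self_sqrt hn0.le
  have hsne : Real.sqrt n ≠ 0 := by positivity
  have e1 : Real.sqrt n * Real.sqrt (2 * L n / n) = Real.sqrt (2 * L n) := by
    rw [← Real.sqrt_mul hn0.le]
    congr 1
    field_simp
  have e2 : Real.sqrt n * (L n / (3 * n)) = L n * Real.sqrt ((n:ℝ)⁻¹) / 3 := by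
    rw [Real.sqrt_inv]
    have h3 : (3:ℝ) * n = 3 * (Real.sqrt n * Real.sqrt n) := by rw [hss]
    rw [h3]
    field_simp
  calc Real.sqrt (2 * L n) * _ + L n * Real.sqrt ((n:ℝ)⁻¹) / 3
      = Real.sqrt n * Real.sqrt (2 * L n / n) * _ + Real.sqrt n * (L n / (3 * n)) := by
        rw [e1, e2]
    _ = Real.sqrt n * (Real.sqrt (2 * L n / n) * _ + L n / (3 * n)) := by ring
end TailAux

section SLLNAux


lemma slln_comp {Ω : Type*} [m0 : MeasurableSpace Ω] (μ : Measure Ω) [IsProbabilityMeasure μ]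
    {d : ℕ} (X : ℕ → Ω → Matrix (Fin d) (Fin d) ℝ)
    (hMeas : ∀ i, Measurable (X i))
    (hIndep : iIndepFun (m := fun _ : ℕ => matMS) X μ)
    (hIdent : ∀ i, IdentDistrib (X i) (X 0) μ μ)
    (f : Matrix (Fin d) (Fin d) ℝ → ℝ) (hf : Measurable f)
    (C : ℝ) (hC : ∀ i ω, |f (X i ω)| ≤ C) :
    ∀ᵐ ω ∂μ, Tendsto (fun n : ℕ => (∑ i ∈ Finset.range n, f (X i ω)) / n) atTop
      (𝓝 (∫ ω, f (X 0 ω) ∂μ)) := by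
  have hint : Integrable (fun ω => f (X 0 ω)) μ := by
    refine ⟨(hf.comp (hMeas 0)).aestronglyMeasurable, ?_⟩
    refine HasFiniteIntegral.of_bounded (C := C) ?_
    filter_upwards with ω
    simpa [Real.norm_eq_abs] using hC 0 ω
  have hindep : Pairwise (Function.onFun (IndepFun · · μ) (fun i => fun ω => f (X i ω))) := by
    intro i j hij
    exact (hIndep.indepFun hij).comp hf hf
  have hident : ∀ i, IdentDistrib (fun ω => f (X i ω)) (fun ω => f (X 0 ω)) μ μ :=
    fun i => (hIdent i).comp hf
  exact strong_law_ae_real _ hint hindep hident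
end SLLNAux

/-- **Sharpness of the classical-sample-variance matrix empirical Bernstein inequality.**
For an i.i.d. sequence of `S_d^{[0,1]}`-valued random matrices with mean `M` and variance
`V`, the deviation term `D_n` of the classical-sample-variance matrix empirical Bernstein
inequality satisfies `√n · D_n → √(2 log(d/α) ‖V‖)` almost surely. -/
theorem matrix_empirical_bernstein_one_classical_sharp
    {Ω : Type*} [m0 : MeasurableSpace Ω] (μ : Measure Ω) [IsProbabilityMeasure μ]
    {d : ℕ} (hd : 0 < d)
    (X : ℕ → Ω → Matrix (Fin d) (Fin d) ℝ)
    (hMeas : ∀ i, Measurable (X i))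
    (hIndep : iIndepFun (m := fun _ : ℕ => matMS) X μ)
    (hIdent : ∀ i, IdentDistrib (X i) (X 0) μ μ)
    (hBdd : ∀ i, ∀ ω, memSd01 (X i ω))
    (M V : Matrix (Fin d) (Fin d) ℝ)
    (hMean : mIntegral μ (X 0) = M)
    (hVar : mIntegral μ (fun ω => (X 0 ω - M) ^ 2) = V)
    (α : ℝ) (hα : α ∈ Set.Ioo (0 : ℝ) 1) :
    ∀ᵐ ω ∂μ, Tendsto (fun n : ℕ =>
        Real.sqrt n *
          (Real.sqrt (2 * Real.log ((n : ℝ) * d / (((n : ℝ) - 1) * α)) / n)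
            * (Real.sqrt (specNorm (((n : ℝ) * ((n : ℝ) - 1))⁻¹ •
                  ∑ i ∈ Finset.range n, ∑ j ∈ Finset.Ioo i n, (X i ω - X j ω) ^ 2))
              + min
                  (Real.sqrt (Real.log (2 * (n : ℝ) * d / α)
                    / (2 * n * specNorm (((n : ℝ) * ((n : ℝ) - 1))⁻¹ •
                        ∑ i ∈ Finset.range n, ∑ j ∈ Finset.Ioo i n, (X i ω - X j ω) ^ 2))))
                  ((2 * Real.log (2 * (n : ℝ) * d / α) / n) ^ ((1 : ℝ) / 4)))
          + Real.log ((n : ℝ) * d / (((n : ℝ) - 1) * α)) / (3 * n)))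
      atTop (nhds (Real.sqrt (2 * Real.log (d / α) * specNorm V))) := by
  obtain ⟨hα0, hα1⟩ := hα
  have hd1 : (1:ℝ) ≤ (d:ℝ) := by exact_mod_cast hd
  -- measurability of entry evaluation maps
  have hEval : ∀ a b : Fin d, Measurable (fun m : Matrix (Fin d) (Fin d) ℝ => m a b) := by
    intro a b
    exact (measurable_pi_apply b).comp (measurable_pi_apply a)
  have hMulMeas : ∀ a b : Fin d, Measurable (fun m : Matrix (Fin d) (Fin d) ℝ => (m * m) a b) := by
    intro a b
    simp only [Matrix.mul_apply]
    exact Finset.measurable_sum _ fun k _ => (hEval a k).mul (hEval k b)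
  have hXH : ∀ i ω, (X i ω).IsHermitian := fun i ω => (hBdd i ω).1.1
  have hXbd : ∀ i ω (a b : Fin d), |X i ω a b| ≤ 1 := fun i ω a b =>
    memSd01_entry_abs_le_one (hBdd i ω) a b
  have hXsqbd : ∀ i ω (a b : Fin d), |(X i ω * X i ω) a b| ≤ (d:ℝ) := by
    intro i ω a b
    rw [Matrix.mul_apply]
    calc |∑ k, X i ω a k * X i ω k b| ≤ ∑ k, |X i ω a k * X i ω k b| :=
          Finset.abs_sum_le_sum_abs _ _
      _ ≤ ∑ _k : Fin d, (1:ℝ) := Finset.sum_le_sum fun k _ => by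
            rw [abs_mul]
            exact mul_le_one₀ (hXbd i ω a k) (abs_nonneg _) (hXbd i ω k b)
      _ = (d:ℝ) := by simp
  have hIntOf : ∀ (g : Ω → ℝ) (c : ℝ), Measurable g → (∀ ω, |g ω| ≤ c) → Integrable g μ :=
    fun g c hg hgb => ⟨hg.aestronglyMeasurable,
      HasFiniteIntegral.of_bounded (C := c)
        (ae_of_all μ fun ω => by simpa [Real.norm_eq_abs] using hgb ω)⟩
  set Q : Matrix (Fin d) (Fin d) ℝ := mIntegral μ (fun ω => X 0 ω * X 0 ω) with hQdef
  have hQentry : ∀ a b : Fin d, (∫ ω, (X 0 ω * X 0 ω) a b ∂μ) = Q a b := fun a b => rfl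
  have hMentry : ∀ a b : Fin d, (∫ ω, X 0 ω a b ∂μ) = M a b := fun a b =>
    congrFun (congrFun hMean a) b
  have hXsym : ∀ ω (a b : Fin d), X 0 ω b a = X 0 ω a b := by
    intro ω a b
    have h := (hXH 0 ω).apply a b
    rwa [star_trivial] at h
  have hMsym : ∀ a b : Fin d, M b a = M a b := by
    intro a b
    rw [← hMentry b a, ← hMentry a b]
    exact integral_congr_ae (Eventually.of_forall fun ω => hXsym ω a b)
  -- V = Q - M * M entrywise
  have hIsq : ∀ a b : Fin d, Integrable (fun ω => (X 0 ω * X 0 ω) a b) μ := fun a b =>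
    hIntOf _ d ((hMulMeas a b).comp (hMeas 0)) (fun ω => hXsqbd 0 ω a b)
  have hIright : ∀ a b : Fin d, Integrable (fun ω => (X 0 ω * M) a b) μ := by
    intro a b
    have he : (fun ω => (X 0 ω * M) a b) = fun ω => ∑ k, X 0 ω a k * M k b := by
      funext ω; rw [Matrix.mul_apply]
    rw [he]
    exact integrable_finset_sum _ fun k _ =>
      (hIntOf _ 1 ((hEval a k).comp (hMeas 0)) (fun ω => hXbd 0 ω a k)).mul_const _
  have hIleft : ∀ a b : Fin d, Integrable (fun ω => (M * X 0 ω) a b) μ := by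
    intro a b
    have he : (fun ω => (M * X 0 ω) a b) = fun ω => ∑ k, M a k * X 0 ω k b := by
      funext ω; rw [Matrix.mul_apply]
    rw [he]
    exact integrable_finset_sum _ fun k _ =>
      (hIntOf _ 1 ((hEval k b).comp (hMeas 0)) (fun ω => hXbd 0 ω k b)).const_mul _
  have hIntRight : ∀ a b : Fin d, (∫ ω, (X 0 ω * M) a b ∂μ) = (M * M) a b := by
    intro a b
    have he : (fun ω => (X 0 ω * M) a b) = fun ω => ∑ k, X 0 ω a k * M k b := by
      funext ω; rw [Matrix.mul_apply]
    have hIk : ∀ k : Fin d, Integrable (fun ω => X 0 ω a k * M k b) μ := fun k =>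
      (hIntOf (fun ω => X 0 ω a k) 1 ((hEval a k).comp (hMeas 0))
        (fun ω => hXbd 0 ω a k)).mul_const _
    rw [he, integral_finset_sum _ (fun k _ => hIk k)]
    rw [Matrix.mul_apply]
    refine Finset.sum_congr rfl fun k _ => ?_
    rw [integral_mul_const, hMentry a k]
  have hIntLeft : ∀ a b : Fin d, (∫ ω, (M * X 0 ω) a b ∂μ) = (M * M) a b := by
    intro a b
    have he : (fun ω => (M * X 0 ω) a b) = fun ω => ∑ k, M a k * X 0 ω k b := by
      funext ω; rw [Matrix.mul_apply]
    have hIk : ∀ k : Fin d, Integrable (fun ω => M a k * X 0 ω k b) μ := fun k =>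
      (hIntOf (fun ω => X 0 ω k b) 1 ((hEval k b).comp (hMeas 0))
        (fun ω => hXbd 0 ω k b)).const_mul _
    rw [he, integral_finset_sum _ (fun k _ => hIk k)]
    rw [Matrix.mul_apply]
    refine Finset.sum_congr rfl fun k _ => ?_
    rw [integral_const_mul, hMentry k b]
  have hV' : ∀ a b : Fin d, V a b = Q a b - (M * M) a b := by
    intro a b
    have hVe : V a b = ∫ ω, ((X 0 ω - M) ^ 2) a b ∂μ := (congrFun (congrFun hVar a) b).symm
    have hpt : (fun ω => ((X 0 ω - M) ^ 2) a b)
        = fun ω => (X 0 ω * X 0 ω) a b - (X 0 ω * M) a b - (M * X 0 ω) a b + (M * M) a b := by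
      funext ω
      rw [pair_sq_expand]
      simp [Matrix.add_apply, Matrix.sub_apply, pow_two]
    have hf2 : Integrable (fun ω => (X 0 ω * X 0 ω) a b - (X 0 ω * M) a b) μ :=
      (hIsq a b).sub (hIright a b)
    have hf3 : Integrable
        (fun ω => (X 0 ω * X 0 ω) a b - (X 0 ω * M) a b - (M * X 0 ω) a b) μ :=
      hf2.sub (hIleft a b)
    rw [hVe, hpt]
    rw [integral_add hf3 (integrable_const _), integral_sub hf2 (hIleft a b),
      integral_sub (hIsq a b) (hIright a b), integral_const]
    rw [hQentry a b, hIntRight a b, hIntLeft a b]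
    simp
  have hQsym : ∀ a b : Fin d, Q b a = Q a b := by
    intro a b
    rw [← hQentry b a, ← hQentry a b]
    refine integral_congr_ae (Eventually.of_forall fun ω => ?_)
    have h := ((hXH 0 ω).pow 2).apply a b
    rw [star_trivial, pow_two] at h
    exact h
  have hMMsym : ∀ a b : Fin d, (M * M) b a = (M * M) a b := by
    intro a b
    have hMH : M.IsHermitian := Matrix.IsHermitian.ext fun i j => by
      rw [star_trivial]; exact hMsym i j
    have h := (hMH.pow 2).apply a b
    rw [star_trivial, pow_two] at h
    exact h
  have hVH : V.IsHermitian := by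
    refine Matrix.IsHermitian.ext fun a b => ?_
    rw [star_trivial, hV' b a, hV' a b, hQsym a b, hMMsym a b]
  -- strong law of large numbers, entrywise
  have hae1 : ∀ᵐ ω ∂μ, ∀ a b : Fin d,
      Tendsto (fun n : ℕ => (∑ i ∈ Finset.range n, X i ω a b) / n) atTop (𝓝 (M a b)) := by
    rw [ae_all_iff]
    intro a
    rw [ae_all_iff]
    intro b
    have h := slln_comp μ X hMeas hIndep hIdent (fun m => m a b) (hEval a b) 1
      (fun i ω => hXbd i ω a b)
    rwa [hMentry a b] at h
  have hae2 : ∀ᵐ ω ∂μ, ∀ a b : Fin d,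
      Tendsto (fun n : ℕ => (∑ i ∈ Finset.range n, (X i ω * X i ω) a b) / n) atTop
        (𝓝 (Q a b)) := by
    rw [ae_all_iff]
    intro a
    rw [ae_all_iff]
    intro b
    have h := slln_comp μ X hMeas hIndep hIdent (fun m => (m * m) a b) (hMulMeas a b) d
      (fun i ω => hXsqbd i ω a b)
    rwa [hQentry a b] at h
  filter_upwards [hae1, hae2] with ω h1 h2
  -- notation for the sums
  set S1 : ℕ → Matrix (Fin d) (Fin d) ℝ := fun n => ∑ i ∈ Finset.range n, X i ω with hS1def
  set S2 : ℕ → Matrix (Fin d) (Fin d) ℝ := fun n => ∑ i ∈ Finset.range n, (X i ω) ^ 2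
    with hS2def
  have t1 : ∀ a b : Fin d, Tendsto (fun n => S1 n a b / n) atTop (𝓝 (M a b)) := by
    intro a b
    refine (h1 a b).congr fun n => ?_
    simp only [hS1def, Matrix.sum_apply]
  have t2 : ∀ a b : Fin d, Tendsto (fun n => S2 n a b / n) atTop (𝓝 (Q a b)) := by
    intro a b
    refine (h2 a b).congr fun n => ?_
    congr 1
    simp only [hS2def, Matrix.sum_apply]
    exact Finset.sum_congr rfl fun i _ => by rw [pow_two]
  -- the sample variance matrix
  have hWH : ∀ n : ℕ, ((((n:ℝ) * ((n:ℝ) - 1))⁻¹ •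
      ∑ i ∈ Finset.range n, ∑ j ∈ Finset.Ioo i n, (X i ω - X j ω) ^ 2)).IsHermitian := by
    intro n
    have hsum : (∑ i ∈ Finset.range n, ∑ j ∈ Finset.Ioo i n,
        (X i ω - X j ω) ^ 2).IsHermitian := by
      refine Finset.sum_induction _ _ (fun A B hA hB => hA.add hB) Matrix.isHermitian_zero ?_
      intro i _
      refine Finset.sum_induction _ _ (fun A B hA hB => hA.add hB) Matrix.isHermitian_zero ?_
      intro j _
      exact ((hXH i ω).sub (hXH j ω)).pow 2
    refine Matrix.IsHermitian.ext fun a b => ?_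
    rw [star_trivial, Matrix.smul_apply, Matrix.smul_apply]
    have h := hsum.apply a b
    rw [star_trivial] at h
    rw [h]
  have hentry : ∀ a b : Fin d, Tendsto (fun n : ℕ =>
      ((((n:ℝ) * ((n:ℝ) - 1))⁻¹ •
        ∑ i ∈ Finset.range n, ∑ j ∈ Finset.Ioo i n, (X i ω - X j ω) ^ 2)) a b)
      atTop (𝓝 (V a b)) := by
    intro a b
    have tprod : Tendsto (fun n => ∑ k, (S1 n a k / n) * (S1 n k b / n)) atTop
        (𝓝 ((M * M) a b)) := by
      rw [Matrix.mul_apply]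
      exact tendsto_finset_sum _ fun k _ => (t1 a k).mul (t1 k b)
    have tmain := nat_div_pred_tendsto.mul ((t2 a b).sub tprod)
    rw [one_mul, ← hV' a b] at tmain
    refine tmain.congr' ?_
    filter_upwards [eventually_ge_atTop 2] with n hn
    have hn2 : (2:ℝ) ≤ n := by exact_mod_cast hn
    have hne : (n:ℝ) ≠ 0 := by linarith
    have hne1 : (n:ℝ) - 1 ≠ 0 := by linarith
    rw [sum_pairs_sq (fun i => X i ω) n]
    rw [Matrix.smul_apply, Matrix.sub_apply, smul_eq_mul]
    have hnsmul : ((n • S2 n) : Matrix (Fin d) (Fin d) ℝ) a b = (n:ℝ) * S2 n a b := by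
      rw [Matrix.smul_apply]
      simp
    have hsq : ((S1 n) ^ 2) a b = ∑ k, S1 n a k * S1 n k b := by
      rw [pow_two, Matrix.mul_apply]
    rw [hnsmul, hsq]
    have hsum2 : ∑ k, (S1 n a k / n) * (S1 n k b / n)
        = (∑ k, S1 n a k * S1 n k b) / ((n:ℝ) * n) := by
      rw [Finset.sum_div]
      exact Finset.sum_congr rfl fun k _ => div_mul_div_comm _ _ _ _
    rw [hsum2]
    field_simp
  -- convergence of the spectral norm
  have hSn : Tendsto (fun n : ℕ => ∑ a : Fin d, ∑ b : Fin d,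
      |((((n:ℝ) * ((n:ℝ) - 1))⁻¹ •
        ∑ i ∈ Finset.range n, ∑ j ∈ Finset.Ioo i n, (X i ω - X j ω) ^ 2) - V) a b|)
      atTop (𝓝 0) := by
    have h0 : (0:ℝ) = ∑ _a : Fin d, ∑ _b : Fin d, (0:ℝ) := by simp
    rw [h0]
    refine tendsto_finset_sum _ fun a _ => tendsto_finset_sum _ fun b _ => ?_
    have h := ((hentry a b).sub (tendsto_const_nhds (x := V a b))).abs
    rw [sub_self, abs_zero] at h
    refine h.congr fun n => ?_
    rw [Matrix.sub_apply]
  have hW : Tendsto (fun n : ℕ => specNorm ((((n:ℝ) * ((n:ℝ) - 1))⁻¹ •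
      ∑ i ∈ Finset.range n, ∑ j ∈ Finset.Ioo i n, (X i ω - X j ω) ^ 2))) atTop
      (𝓝 (specNorm V)) := by
    have hub : ∀ n : ℕ, |specNorm ((((n:ℝ) * ((n:ℝ) - 1))⁻¹ •
        ∑ i ∈ Finset.range n, ∑ j ∈ Finset.Ioo i n, (X i ω - X j ω) ^ 2)) - specNorm V|
        ≤ ∑ a : Fin d, ∑ b : Fin d,
          |((((n:ℝ) * ((n:ℝ) - 1))⁻¹ •
            ∑ i ∈ Finset.range n, ∑ j ∈ Finset.Ioo i n, (X i ω - X j ω) ^ 2) - V) a b| :=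
      fun n => abs_specNorm_sub_le hd (hWH n) hVH
    have habs := squeeze_zero (fun n => abs_nonneg _) hub hSn
    rw [tendsto_iff_norm_sub_tendsto_zero]
    refine habs.congr fun n => ?_
    rw [Real.norm_eq_abs]
  exact tail_limit hd1 ⟨hα0, hα1⟩ _ (specNorm_nonneg hd hVH) hW
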